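/- Define g on prime powers by p^ℓ(1 - p^{-2})·g(p^ℓ, p^m) = 0 if ℓ ≥ m ≥ 2; = 1 if m < min{2,ℓ}; = 1 - p^{ℓ-2} if ℓ = m ≤ 1, extend multiplicatively to g(q,d) for d | q, and set G(q) := Σ_{b=1}^{q} e(b/q)·g(q, gcd(b,q)). Then G is multiplicative, vanishes unless q is cube-free, and G(p) = G(p²) = -p^{-2}(1 - p^{-2})^{-1} for every prime p. -/

import Mathlib

/-- The local factor `g(p^ℓ, p^m)` (for `m ≤ ℓ`), defined by
`p^ℓ(1-p^{-2})·g(p^ℓ,p^m) = 0` if `ℓ ≥ m ≥ 2`, `= 1` if `m < min{2,ℓ}`,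
`= 1 - p^{ℓ-2}` if `ℓ = m ≤ 1`. -/
noncomputable def gPP (p l m : ℕ) : ℝ :=
  (if 2 ≤ m then 0 else if m < min 2 l then 1 else 1 - (p : ℝ) ^ ((l : ℤ) - 2)) /
    ((p : ℝ) ^ l * (1 - (p : ℝ) ^ (-2 : ℤ)))

/-- `g(q,d) := ∏_{p ∣ q} g(p^{ν_p(q)}, p^{ν_p(d)})` for `d ∣ q`. -/
noncomputable def gMul (q d : ℕ) : ℝ :=
  ∏ p ∈ q.primeFactors, gPP p (q.factorization p) (d.factorization p)

/-- `G(q) := ∑_{b=1}^{q} e(b/q)·g(q, gcd(b,q))`. -/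
noncomputable def Gfun (q : ℕ) : ℂ :=
  ∑ b ∈ Finset.Icc 1 q,
    Complex.exp (2 * Real.pi * Complex.I * b / q) * (gMul q (Nat.gcd b q) : ℝ)


/-- Range version of `Gfun`. -/
noncomputable def Gf (q : ℕ) : ℂ :=
  ∑ b ∈ Finset.range q,
    Complex.exp (2 * Real.pi * Complex.I * b / q) * (gMul q (Nat.gcd b q) : ℝ)

lemma Gfun_eq_Gf (q : ℕ) : Gfun q = Gf q := by
  rcases Nat.eq_zero_or_pos q with h | h
  · subst h; simp [Gfun, Gf]
  · have h1 : Finset.Icc 1 q = insert q (Finset.Ico 1 q) := by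
      ext b; simp only [Finset.mem_Icc, Finset.mem_Ico, Finset.mem_insert]; omega
    have h2 : Finset.range q = insert 0 (Finset.Ico 1 q) := by
      ext b; simp only [Finset.mem_range, Finset.mem_Ico, Finset.mem_insert]; omega
    rw [Gfun, Gf, h1, h2, Finset.sum_insert (by simp), Finset.sum_insert (by simp)]
    have hq : (q:ℂ) ≠ 0 := Nat.cast_ne_zero.mpr (by omega)
    congr 1
    rw [Nat.gcd_self, Nat.gcd_zero_left]
    congr 1
    rw [show 2 * (Real.pi:ℂ) * Complex.I * (q:ℕ) / (q:ℕ) = 2 * Real.pi * Complex.I by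
      field_simp, Complex.exp_two_pi_mul_I]
    norm_num

lemma sum_exp_zero {n : ℕ} (hn : 2 ≤ n) :
    ∑ b ∈ Finset.range n, Complex.exp (2 * Real.pi * Complex.I * b / n) = 0 := by
  have hn0 : (n:ℂ) ≠ 0 := Nat.cast_ne_zero.mpr (by omega)
  set x := Complex.exp (2 * Real.pi * Complex.I / n) with hx
  have hxb : ∀ b : ℕ, Complex.exp (2 * Real.pi * Complex.I * b / n) = x ^ b := by
    intro b
    rw [hx, ← Complex.exp_nat_mul]
    congr 1
    ring
  have hxn : x ^ n = 1 := by
    rw [hx, ← Complex.exp_nat_mul,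
      show (n:ℂ) * (2 * Real.pi * Complex.I / n) = 2 * Real.pi * Complex.I by field_simp]
    exact Complex.exp_two_pi_mul_I
  have hx1 : x ≠ 1 := by
    intro hfalse
    rw [hx, Complex.exp_eq_one_iff] at hfalse
    obtain ⟨k, hk⟩ := hfalse
    have h2 : (2 * (Real.pi:ℂ) * Complex.I) ≠ 0 := by
      simp [Real.pi_ne_zero, Complex.I_ne_zero]
    have e1 : (2 * (Real.pi:ℂ) * Complex.I) * (n:ℂ)⁻¹ = (2 * (Real.pi:ℂ) * Complex.I) * k := by
      calc (2 * (Real.pi:ℂ) * Complex.I) * (n:ℂ)⁻¹ = 2 * Real.pi * Complex.I / n := by ring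
        _ = k * (2 * Real.pi * Complex.I) := hk
        _ = (2 * (Real.pi:ℂ) * Complex.I) * k := by ring
    have e2 : ((n:ℂ))⁻¹ = (k:ℂ) := mul_left_cancel₀ h2 e1
    have e3 : ((k * n : ℤ) : ℂ) = 1 := by
      push_cast
      rw [← e2]
      exact inv_mul_cancel₀ hn0
    have e4 : (k * (n:ℤ)) = 1 := by exact_mod_cast e3
    have h5 : (n:ℤ) ∣ 1 := ⟨k, by linarith⟩
    have h6 : n ∣ 1 := by exact_mod_cast h5
    have := Nat.le_of_dvd one_pos h6
    omega
  have hsum : (∑ b ∈ Finset.range n, x ^ b) * (x - 1) = 0 := by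
    rw [geom_sum_mul, hxn, sub_self]
  calc ∑ b ∈ Finset.range n, Complex.exp (2 * Real.pi * Complex.I * b / n)
      = ∑ b ∈ Finset.range n, x ^ b := Finset.sum_congr rfl fun b _ => hxb b
    _ = 0 := (mul_eq_zero.mp hsum).resolve_right (sub_ne_zero.mpr hx1)

lemma sum_mult {M : Type*} [AddCommMonoid M] (m n : ℕ) (hm : 0 < m) (f : ℕ → M) :
    ∑ b ∈ Finset.range (m * n), (if m ∣ b then f b else 0)
      = ∑ j ∈ Finset.range n, f (m * j) := by
  rw [← Finset.sum_filter]
  have himg : (Finset.range (m*n)).filter (m ∣ ·) = (Finset.range n).image (m * ·) := by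
    ext b
    simp only [Finset.mem_filter, Finset.mem_range, Finset.mem_image]
    constructor
    · rintro ⟨hb, j, rfl⟩
      exact ⟨j, Nat.lt_of_mul_lt_mul_left hb, rfl⟩
    · rintro ⟨j, hj, rfl⟩
      exact ⟨(Nat.mul_lt_mul_left hm).mpr hj, Dvd.intro j rfl⟩
  rw [himg, Finset.sum_image (fun x _ y _ hxy => Nat.eq_of_mul_eq_mul_left hm hxy)]

lemma gMul_mul {q r : ℕ} (hq : q ≠ 0) (hr : r ≠ 0) (h : Nat.Coprime q r)
    {d1 d2 : ℕ} (h1 : d1 ∣ q) (h2 : d2 ∣ r) :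
    gMul (q * r) (d1 * d2) = gMul q d1 * gMul r d2 := by
  have hd1 : d1 ≠ 0 := fun e => hq (by simpa [e, zero_dvd_iff] using h1)
  have hd2 : d2 ≠ 0 := fun e => hr (by simpa [e, zero_dvd_iff] using h2)
  have hdisj : Disjoint q.primeFactors r.primeFactors := h.disjoint_primeFactors
  have hfa : ∀ {a : ℕ}, a ≠ 0 → ∀ p, p ∉ a.primeFactors → a.factorization p = 0 := by
    intro a _ p hp
    rw [← Nat.support_factorization] at hp
    exact Finsupp.notMem_support_iff.mp hp
  rw [gMul, gMul, gMul, Nat.primeFactors_mul hq hr, Finset.prod_union hdisj]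
  congr 1
  · apply Finset.prod_congr rfl
    intro p hp
    have hpr : p ∉ r.primeFactors := Finset.disjoint_left.mp hdisj hp
    have hpd2 : p ∉ d2.primeFactors := fun hc => hpr (Nat.primeFactors_mono h2 hr hc)
    have e1 : (q*r).factorization p = q.factorization p := by
      rw [Nat.factorization_mul hq hr, Finsupp.add_apply, hfa hr p hpr, add_zero]
    have e2 : (d1*d2).factorization p = d1.factorization p := by
      rw [Nat.factorization_mul hd1 hd2, Finsupp.add_apply, hfa hd2 p hpd2, add_zero]
    rw [e1, e2]
  · apply Finset.prod_congr rfl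
    intro p hp
    have hpq : p ∉ q.primeFactors := Finset.disjoint_right.mp hdisj hp
    have hpd1 : p ∉ d1.primeFactors := fun hc => hpq (Nat.primeFactors_mono h1 hq hc)
    have e1 : (q*r).factorization p = r.factorization p := by
      rw [Nat.factorization_mul hq hr, Finsupp.add_apply, hfa hq p hpq, zero_add]
    have e2 : (d1*d2).factorization p = d2.factorization p := by
      rw [Nat.factorization_mul hd1 hd2, Finsupp.add_apply, hfa hd1 p hpd1, zero_add]
    rw [e1, e2]

lemma gMul_pp {p : ℕ} (hp : p.Prime) {l : ℕ} (hl : l ≠ 0) (d : ℕ) :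
    gMul (p ^ l) d = gPP p l (d.factorization p) := by
  rw [gMul, Nat.primeFactors_prime_pow hl hp, Finset.prod_singleton,
    hp.factorization_pow, Finsupp.single_eq_same]

lemma Gf_p {p : ℕ} (hp : p.Prime) :
    Gf p = ((gPP p 1 1 : ℝ) : ℂ) - ((gPP p 1 0 : ℝ) : ℂ) := by
  have hp2 := hp.two_le
  have h2 : Finset.range p = insert 0 (Finset.Ico 1 p) := by
    ext b; simp only [Finset.mem_range, Finset.mem_Ico, Finset.mem_insert]; omega
  have hg1 : gMul p p = gPP p 1 1 := by
    have := gMul_pp hp (l := 1) one_ne_zero p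
    rw [pow_one] at this
    rw [this, hp.factorization_self]
  have hg0 : gMul p 1 = gPP p 1 0 := by
    have := gMul_pp hp (l := 1) one_ne_zero 1
    rw [pow_one] at this
    rw [this, Nat.factorization_one, Finsupp.coe_zero, Pi.zero_apply]
  have hgb : ∀ b ∈ Finset.Ico 1 p, Nat.gcd b p = 1 := by
    intro b hb
    rw [Finset.mem_Ico] at hb
    have hnd : ¬ p ∣ b := Nat.not_dvd_of_pos_of_lt hb.1 hb.2
    exact ((hp.coprime_iff_not_dvd).mpr hnd).symm
  rw [Gf, h2, Finset.sum_insert (by simp)]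
  rw [Finset.sum_congr rfl (fun b hb => by rw [hgb b hb, hg0])]
  rw [← Finset.sum_mul]
  have hico : ∑ b ∈ Finset.Ico 1 p, Complex.exp (2 * Real.pi * Complex.I * b / p) = -1 := by
    have h0 := sum_exp_zero hp2
    rw [h2, Finset.sum_insert (by simp)] at h0
    simp only [Nat.cast_zero, mul_zero, zero_div, Complex.exp_zero] at h0
    linear_combination h0
  rw [hico, Nat.gcd_zero_left, hg1]
  simp [Complex.exp_zero]
  ring

lemma Gf_pp {p : ℕ} (hp : p.Prime) {l : ℕ} (hl : 2 ≤ l) :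
    Gf (p ^ l) = -(((gPP p l 0 : ℝ) : ℂ)) *
      ∑ j ∈ Finset.range (p ^ (l - 2)),
        Complex.exp (2 * Real.pi * Complex.I * j / (p ^ (l-2) : ℕ)) := by
  have hp2 := hp.two_le
  have hpl2 : 2 ≤ p ^ l := le_trans hp2 (Nat.le_self_pow (by omega) p)
  set c : ℂ := ((gPP p l 0 : ℝ) : ℂ) with hc
  have key : ∀ b : ℕ,
      Complex.exp (2 * Real.pi * Complex.I * b / (p^l : ℕ)) * ((gMul (p^l) (Nat.gcd b (p^l)) : ℝ) : ℂ)
      = if p^2 ∣ b then 0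
        else Complex.exp (2 * Real.pi * Complex.I * b / (p^l : ℕ)) * c := by
    intro b
    obtain ⟨m, hmle, heq⟩ := (Nat.dvd_prime_pow hp).mp (Nat.gcd_dvd_right b (p^l))
    have hfact : (Nat.gcd b (p^l)).factorization p = m := by
      rw [heq, hp.factorization_pow, Finsupp.single_eq_same]
    rw [gMul_pp hp (by omega) _, hfact]
    by_cases hdvd : p^2 ∣ b
    · have h2m : 2 ≤ m := by
        have hd : p^2 ∣ p^m := by
          rw [← heq]; exact Nat.dvd_gcd hdvd (pow_dvd_pow p hl)
        exact (Nat.pow_dvd_pow_iff_le_right hp.one_lt).mp hd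
      rw [if_pos hdvd]
      have hz : gPP p l m = 0 := by rw [gPP, if_pos h2m, zero_div]
      simp [hz]
    · have h2m : m < 2 := by
        by_contra hcon
        exact hdvd (dvd_trans (pow_dvd_pow p (by omega)) (heq ▸ Nat.gcd_dvd_left b (p^l)))
      rw [if_neg hdvd]
      have he : gPP p l m = gPP p l 0 := by
        rw [gPP, gPP, if_neg (by omega), if_pos (by omega : m < min 2 l),
          if_neg (by omega), if_pos (by omega : 0 < min 2 l)]
      rw [he]
  rw [Gf, Finset.sum_congr rfl (fun b _ => key b)]
  have hsplit : ∀ b : ℕ,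
      (if p^2 ∣ b then (0:ℂ) else Complex.exp (2 * Real.pi * Complex.I * b / (p^l : ℕ)) * c)
      = Complex.exp (2 * Real.pi * Complex.I * b / (p^l : ℕ)) * c
        - (if p^2 ∣ b then Complex.exp (2 * Real.pi * Complex.I * b / (p^l : ℕ)) * c else 0) := by
    intro b; by_cases hb : p^2 ∣ b <;> simp [hb]
  rw [Finset.sum_congr rfl (fun b _ => hsplit b), Finset.sum_sub_distrib,
    ← Finset.sum_mul, sum_exp_zero hpl2, zero_mul]
  have hpow : p ^ l = p^2 * p^(l-2) := by rw [← pow_add]; congr 1; omega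
  rw [show (Finset.range (p^l)) = Finset.range (p^2 * p^(l-2)) by rw [← hpow]]
  rw [sum_mult (p^2) (p^(l-2)) (by positivity) _]
  have hterm : ∀ j : ℕ,
      Complex.exp (2 * Real.pi * Complex.I * (p^2 * j : ℕ) / (p^l : ℕ)) * c
      = Complex.exp (2 * Real.pi * Complex.I * j / (p^(l-2) : ℕ)) * c := by
    intro j
    have hpc : ((p:ℂ)) ≠ 0 := Nat.cast_ne_zero.mpr (by omega)
    have hpc2 : ((p:ℂ))^2 ≠ 0 := pow_ne_zero _ hpc
    congr 2
    rw [hpow]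
    push_cast
    rw [show (2 * (Real.pi:ℂ) * Complex.I * ((p:ℂ)^2 * (j:ℂ)))
        = ((p:ℂ)^2) * (2*(Real.pi:ℂ)*Complex.I*(j:ℂ)) from by ring,
      mul_div_mul_left _ _ hpc2]
  rw [Finset.sum_congr rfl (fun j _ => hterm j), ← Finset.sum_mul]
  ring

lemma Gf_p2 {p : ℕ} (hp : p.Prime) : Gf (p^2) = -(((gPP p 2 0 : ℝ) : ℂ)) := by
  rw [Gf_pp hp le_rfl]
  norm_num

lemma Gf_pl {p : ℕ} (hp : p.Prime) {l : ℕ} (hl : 3 ≤ l) : Gf (p^l) = 0 := by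
  rw [Gf_pp hp (by omega), sum_exp_zero (le_trans hp.two_le (Nat.le_self_pow (by omega) p)),
    mul_zero]

lemma gpp_val {p : ℕ} (hp : p.Prime) :
    ((gPP p 1 1 : ℝ) : ℂ) - ((gPP p 1 0 : ℝ) : ℂ)
      = -((p : ℂ) ^ (-2 : ℤ)) * (1 - (p : ℂ) ^ (-2 : ℤ))⁻¹ ∧
    -(((gPP p 2 0 : ℝ) : ℂ)) = -((p : ℂ) ^ (-2 : ℤ)) * (1 - (p : ℂ) ^ (-2 : ℤ))⁻¹ := by
  have hp2 := hp.two_le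
  have hx0 : (p:ℂ) ≠ 0 := Nat.cast_ne_zero.mpr (by omega)
  have hr0 : (p:ℝ) ≠ 0 := Nat.cast_ne_zero.mpr (by omega)
  have hx1 : ((p:ℂ))^2 ≠ 1 := by
    intro hcon
    have : ((p^2 : ℕ) : ℂ) = ((1:ℕ) : ℂ) := by push_cast; rw [hcon]
    have h2 : p^2 = 1 := Nat.cast_injective this
    nlinarith
  have hxr1 : ((p:ℝ))^2 ≠ 1 := by
    intro hcon
    have : ((p^2 : ℕ) : ℝ) = ((1:ℕ) : ℝ) := by push_cast; rw [hcon]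
    have h2 : p^2 = 1 := Nat.cast_injective this
    nlinarith
  have hz : ∀ {F : Type} [inst : Field F] (x : F), x ≠ 0 → x ^ (-2:ℤ) = (x^2)⁻¹ := by
    intro F _ x hx
    rw [show (-2:ℤ) = -(2:ℤ) by norm_num, zpow_neg, zpow_two, sq]
  have hzm1 : ((p:ℝ)) ^ ((1:ℤ) - 2) = (p:ℝ)⁻¹ := by norm_num
  have hdc : (1 - (p:ℂ)^(-2:ℤ)) ≠ 0 := by
    rw [hz _ hx0]
    rw [sub_ne_zero]
    intro hcon
    exact hx1 (by rw [← inv_inv ((p:ℂ)^2), ← hcon, inv_one])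
  have hdr : (1 - (p:ℝ)^(-2:ℤ)) ≠ 0 := by
    rw [hz _ hr0]
    rw [sub_ne_zero]
    intro hcon
    exact hxr1 (by rw [← inv_inv ((p:ℝ)^2), ← hcon, inv_one])
  constructor
  · have hne : ((p:ℂ)^2 - 1) ≠ 0 := sub_ne_zero.mpr hx1
    rw [gPP, gPP]
    norm_num
    have ha : (1 - ((p:ℂ)^2)⁻¹) = ((p:ℂ)^2 - 1)/((p:ℂ)^2) := by field_simp
    rw [ha]
    field_simp
    ring
  · rw [gPP]
    norm_num
    ring

lemma Gf_zmod (q : ℕ) [NeZero q] :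
    Gf q = ∑ x : ZMod q,
      Complex.exp (2 * Real.pi * Complex.I * (x.val) / q) * ((gMul q (Nat.gcd x.val q) : ℝ) : ℂ) := by
  rw [Gf]
  refine Finset.sum_nbij' (fun b => ((b:ℕ) : ZMod q)) (fun x => x.val) ?_ ?_ ?_ ?_ ?_
  · intro a _; exact Finset.mem_univ _
  · intro x _; exact Finset.mem_range.mpr (ZMod.val_lt x)
  · intro a ha; exact ZMod.val_cast_of_lt (Finset.mem_range.mp ha)
  · intro x _; exact ZMod.natCast_rightInverse x
  · intro a ha; rw [ZMod.val_cast_of_lt (Finset.mem_range.mp ha)]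

lemma Gf_mul {q r : ℕ} (hq : q ≠ 0) (hr : r ≠ 0) (h : Nat.Coprime q r) :
    Gf (q * r) = Gf q * Gf r := by
  haveI : NeZero q := ⟨hq⟩
  haveI : NeZero r := ⟨hr⟩
  haveI : NeZero (q * r) := ⟨mul_ne_zero hq hr⟩
  have hqc : (q:ℂ) ≠ 0 := Nat.cast_ne_zero.mpr hq
  have hrc : (r:ℂ) ≠ 0 := Nat.cast_ne_zero.mpr hr
  rw [Gf_zmod (q*r), Gf_zmod q, Gf_zmod r]
  set φ : ZMod q × ZMod r → ZMod (q*r) :=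
    fun ac => ((ac.1.val * r + ac.2.val * q : ℕ) : ZMod (q*r)) with hφ
  have hbij : Function.Bijective φ := by
    rw [Fintype.bijective_iff_injective_and_card]
    constructor
    · rintro ⟨a, c⟩ ⟨a', c'⟩ hac
      have hcastq : ∀ (a : ZMod q) (c : ZMod r),
          (ZMod.castHom (dvd_mul_right q r) (ZMod q)) (φ (a, c)) = a * r := by
        intro a c
        show (ZMod.castHom (dvd_mul_right q r) (ZMod q)) ((a.val * r + c.val * q : ℕ) : ZMod (q*r)) = _
        rw [map_natCast]
        push_cast
        rw [ZMod.natCast_self, ZMod.natCast_rightInverse a, mul_zero, add_zero]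
      have hcastr : ∀ (a : ZMod q) (c : ZMod r),
          (ZMod.castHom (dvd_mul_left r q) (ZMod r)) (φ (a, c)) = c * q := by
        intro a c
        show (ZMod.castHom (dvd_mul_left r q) (ZMod r)) ((a.val * r + c.val * q : ℕ) : ZMod (q*r)) = _
        rw [map_natCast]
        push_cast
        rw [ZMod.natCast_self, ZMod.natCast_rightInverse c, mul_zero, zero_add]
      have hru : IsUnit ((r : ZMod q)) := (ZMod.isUnit_iff_coprime r q).mpr h.symm
      have hqu : IsUnit ((q : ZMod r)) := (ZMod.isUnit_iff_coprime q r).mpr h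
      have e1 : a * (r : ZMod q) = a' * r := by
        rw [← hcastq a c, ← hcastq a' c', hac]
      have e2 : c * (q : ZMod r) = c' * q := by
        rw [← hcastr a c, ← hcastr a' c', hac]
      have : a = a' := hru.mul_right_cancel e1
      have : c = c' := hqu.mul_right_cancel e2
      simp_all
    · simp [ZMod.card, Fintype.card_prod]
  rw [← Function.Bijective.sum_comp hbij
    (fun x => Complex.exp (2 * Real.pi * Complex.I * (x.val) / (q*r : ℕ))
      * ((gMul (q*r) (Nat.gcd x.val (q*r)) : ℝ) : ℂ)),
    Finset.sum_mul_sum, Fintype.sum_prod_type]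
  apply Finset.sum_congr rfl
  intro a _
  apply Finset.sum_congr rfl
  intro c _
  have hv : (φ (a, c)).val = (a.val * r + c.val * q) % (q * r) := ZMod.val_natCast _ _
  have hgcd : Nat.gcd ((φ (a,c)).val) (q*r) = Nat.gcd a.val q * Nat.gcd c.val r := by
    rw [hv]
    rw [← Nat.gcd_rec, Nat.gcd_comm, Nat.Coprime.gcd_mul _ h]
    congr 1
    · rw [Nat.gcd_comm _ q, mul_comm c.val q, Nat.gcd_add_mul_left_right q (a.val * r) c.val,
        Nat.gcd_comm q (a.val * r), Nat.Coprime.gcd_mul_right_cancel a.val h.symm]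
    · rw [Nat.gcd_comm _ r, add_comm, mul_comm a.val r,
        Nat.gcd_add_mul_left_right r (c.val * q) a.val,
        Nat.gcd_comm r (c.val * q), Nat.Coprime.gcd_mul_right_cancel c.val h]
  have hE : Complex.exp (2 * Real.pi * Complex.I * ((φ (a,c)).val) / ((q*r : ℕ):ℂ))
      = Complex.exp (2 * Real.pi * Complex.I * (a.val) / q)
        * Complex.exp (2 * Real.pi * Complex.I * (c.val) / r) := by
    rw [hv, ← Complex.exp_add, Complex.exp_eq_exp_iff_exists_int]
    refine ⟨-(((a.val * r + c.val * q) / (q*r) : ℕ) : ℤ), ?_⟩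
    have h0 : (((a.val * r + c.val * q) % (q*r) : ℕ) : ℂ)
        + (q : ℂ) * (r : ℂ) * (((a.val * r + c.val * q) / (q*r) : ℕ) : ℂ)
        = (a.val : ℂ) * (r : ℂ) + (c.val : ℂ) * (q : ℂ) := by
      exact_mod_cast congrArg (Nat.cast : ℕ → ℂ) (Nat.mod_add_div (a.val * r + c.val * q) (q*r))
    have h1 : (((a.val * r + c.val * q) % (q * r) : ℕ) : ℂ)
        = (a.val:ℂ) * r + (c.val:ℂ) * q
          - (q:ℂ) * r * (((a.val * r + c.val * q) / (q*r) : ℕ) : ℂ) := by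
      linear_combination h0
    rw [h1, Int.cast_neg, Int.cast_natCast, Nat.cast_mul]
    field_simp
    ring
  rw [hgcd, hE]
  have hgm : gMul (q*r) (Nat.gcd a.val q * Nat.gcd c.val r)
      = gMul q (Nat.gcd a.val q) * gMul r (Nat.gcd c.val r) :=
    gMul_mul hq hr h (Nat.gcd_dvd_right _ _) (Nat.gcd_dvd_right _ _)
  rw [hgm]
  push_cast
  ring

/-- `G` is multiplicative, vanishes unless `q` is cube-free, and
`G(p) = G(p²) = -p^{-2}(1-p^{-2})^{-1}` for every prime `p`. -/
theorem stmt10 :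
    (Gfun 1 = 1 ∧ ∀ q r : ℕ, Nat.Coprime q r → Gfun (q * r) = Gfun q * Gfun r) ∧
    (∀ q p : ℕ, p.Prime → p ^ 3 ∣ q → Gfun q = 0) ∧
    (∀ p : ℕ, p.Prime →
      Gfun p = -((p : ℂ) ^ (-2 : ℤ)) * (1 - (p : ℂ) ^ (-2 : ℤ))⁻¹ ∧
      Gfun (p ^ 2) = -((p : ℂ) ^ (-2 : ℤ)) * (1 - (p : ℂ) ^ (-2 : ℤ))⁻¹) := by
  have h0 : Gfun 0 = 0 := by rw [Gfun]; simp
  have hG1 : Gfun 1 = 1 := by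
    rw [Gfun_eq_Gf, Gf]
    simp [gMul, Nat.primeFactors_one]
  have hmul : ∀ q r : ℕ, Nat.Coprime q r → Gfun (q * r) = Gfun q * Gfun r := by
    intro q r h
    rcases eq_or_ne q 0 with rfl | hq
    · rw [Nat.coprime_zero_left] at h
      subst h
      simp [h0]
    · rcases eq_or_ne r 0 with rfl | hr
      · rw [Nat.coprime_zero_right] at h
        subst h
        simp [h0]
      · rw [Gfun_eq_Gf, Gfun_eq_Gf, Gfun_eq_Gf]
        exact Gf_mul hq hr h
  refine ⟨⟨hG1, hmul⟩, ?_, ?_⟩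
  · intro q p hp h3
    rcases eq_or_ne q 0 with rfl | hq
    · exact h0
    · have hl : 3 ≤ q.factorization p := (hp.pow_dvd_iff_le_factorization hq).mp h3
      have hco : Nat.Coprime (p ^ q.factorization p) (q / p ^ q.factorization p) :=
        Nat.Coprime.pow_left _ (Nat.coprime_ordCompl hp hq)
      have hqeq : p ^ q.factorization p * (q / p ^ q.factorization p) = q :=
        Nat.ordProj_mul_ordCompl_eq_self q p
      calc Gfun q = Gfun (p ^ q.factorization p * (q / p ^ q.factorization p)) := by rw [hqeq]
        _ = Gfun (p ^ q.factorization p) * Gfun (q / p ^ q.factorization p) := hmul _ _ hco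
        _ = 0 := by rw [Gfun_eq_Gf, Gf_pl hp hl, zero_mul]
  · intro p hp
    constructor
    · rw [Gfun_eq_Gf, Gf_p hp]
      exact (gpp_val hp).1
    · rw [Gfun_eq_Gf, Gf_p2 hp]
      exact (gpp_val hp).2
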